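/- In the Laurent polynomial ring ℂ[x, x^{−1}] set f̃ = x^{−2} + 2x^{−1} + 1, g̃ = −2·(x^{−3} + 2x^{−2} + x^{−1}), and let D be the derivation (x+1)·d/dx. Then for every integer j ≥ 0, the three elements D^j g̃, f̃·D^j g̃ and g̃·D^j g̃ all lie in x^{−1}·ℂ[x^{−1}], the span of the strictly negative powers of x. (Here f̃ and g̃ arise from f_{1/2}(z) = e^{2z}/(e^z−1)² and g_{1/2} = ∂_z f_{1/2} via the substitution x = e^z − 1, under which ∂_z becomes D.) -/

import Mathlib

noncomputable section

open LaurentPolynomial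

/-- The derivative `d/dx` on the Laurent polynomial ring `ℂ[x, x⁻¹]`:
`xⁿ ↦ n·xⁿ⁻¹`. -/
def lpDeriv (p : LaurentPolynomial ℂ) : LaurentPolynomial ℂ :=
  Finsupp.sum p.coeff fun n a => ((n : ℂ) * a) • T (n - 1)

/-- The ℂ-subspace `x⁻¹·ℂ[x⁻¹]` of `ℂ[x, x⁻¹]` spanned by the strictly negative
powers of `x`. -/
def negPowers : Submodule ℂ (LaurentPolynomial ℂ) :=
  Submodule.span ℂ (Set.range fun m : ℕ => T (-(m + 1) : ℤ))
lemma lpDeriv_add (p q : LaurentPolynomial ℂ) :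
    lpDeriv (p + q) = lpDeriv p + lpDeriv q := by
  unfold lpDeriv
  apply Finsupp.sum_add_index' (by simp) (by intro n a b; rw [mul_add, add_smul])

lemma lpDeriv_smul (c : ℂ) (p : LaurentPolynomial ℂ) :
    lpDeriv (c • p) = c • lpDeriv p := by
  unfold lpDeriv
  rw [AddMonoidAlgebra.coeff_smul, Finsupp.sum_smul_index' (by simp), Finsupp.smul_sum]
  congr 1; ext n a
  rw [smul_eq_mul, smul_smul]; ring_nf

lemma lpDeriv_T (n : ℤ) : lpDeriv (T n) = ((n : ℂ)) • T (n - 1) := by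
  unfold lpDeriv
  rw [T, AddMonoidAlgebra.coeff_single, Finsupp.sum_single_index (by simp)]
  simp

lemma T_mem (m : ℕ) : T (-(m + 1) : ℤ) ∈ negPowers :=
  Submodule.subset_span ⟨m, rfl⟩

lemma mem_T_neg {n : ℤ} (hn : n < 0) : T n ∈ negPowers := by
  obtain ⟨m, rfl⟩ : ∃ m : ℕ, n = -(m + 1) := by
    refine ⟨(-n - 1).toNat, ?_⟩
    omega
  exact T_mem m

lemma mul_T_mem (k : ℤ) (hk : k ≤ 0) {p} (hp : p ∈ negPowers) :
    T k * p ∈ negPowers := by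
  induction hp using Submodule.span_induction with
  | mem x hx =>
    obtain ⟨m, rfl⟩ := hx
    rw [← T_add]
    exact mem_T_neg (by omega)
  | zero => simp [negPowers, Submodule.zero_mem]
  | add x y hx hy ihx ihy => rw [mul_add]; exact Submodule.add_mem _ ihx ihy
  | smul a x hx ih => rw [mul_smul_comm]; exact Submodule.smul_mem _ _ ih

lemma D_mem {p} (hp : p ∈ negPowers) : (T 1 + 1) * lpDeriv p ∈ negPowers := by
  induction hp using Submodule.span_induction with
  | mem x hx =>
    obtain ⟨m, rfl⟩ := hx
    rw [lpDeriv_T, mul_smul_comm]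
    refine Submodule.smul_mem _ _ ?_
    rw [add_mul, one_mul, ← T_add]
    exact Submodule.add_mem _ (mem_T_neg (by omega)) (mem_T_neg (by omega))
  | zero => simp [lpDeriv]
  | add x y hx hy ihx ihy =>
    rw [lpDeriv_add, mul_add]; exact Submodule.add_mem _ ihx ihy
  | smul a x hx ih =>
    rw [lpDeriv_smul, mul_smul_comm]; exact Submodule.smul_mem _ _ ih

lemma g_mem : ((-2 : ℂ) • (T (-3 : ℤ) + 2 • T (-2 : ℤ) + T (-1 : ℤ))) ∈ negPowers := by
  rw [two_smul]
  refine Submodule.smul_mem _ _ ?_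
  refine Submodule.add_mem _ (Submodule.add_mem _ ?_ (Submodule.add_mem _ ?_ ?_)) ?_ <;>
    exact mem_T_neg (by omega)

lemma mulf_mem {p} (hp : p ∈ negPowers) :
    (T (-2 : ℤ) + 2 • T (-1 : ℤ) + 1) * p ∈ negPowers := by
  rw [two_smul, add_mul, add_mul, add_mul, one_mul]
  refine Submodule.add_mem _ (Submodule.add_mem _ ?_ (Submodule.add_mem _ ?_ ?_)) hp <;>
    exact mul_T_mem _ (by omega) hp

lemma mulg_mem {p} (hp : p ∈ negPowers) :
    ((-2 : ℂ) • (T (-3 : ℤ) + 2 • T (-2 : ℤ) + T (-1 : ℤ))) * p ∈ negPowers := by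
  rw [two_smul, smul_mul_assoc]
  refine Submodule.smul_mem _ _ ?_
  rw [add_mul, add_mul, add_mul]
  refine Submodule.add_mem _ (Submodule.add_mem _ ?_ (Submodule.add_mem _ ?_ ?_)) ?_ <;>
    exact mul_T_mem _ (by omega) hp

/-- In `ℂ[x, x⁻¹]` set `f̃ = x⁻² + 2x⁻¹ + 1`, `g̃ = −2·(x⁻³ + 2x⁻² + x⁻¹)` (arising from
`f_{1/2}(z) = e^{2z}/(eᶻ−1)²` and `g_{1/2} = ∂_z f_{1/2}` via `x = eᶻ − 1`), and let `D`
be the derivation `(x+1)·d/dx`.  Then for every `j ≥ 0` the elements `Dʲg̃`, `f̃·Dʲg̃`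
and `g̃·Dʲg̃` all lie in `x⁻¹·ℂ[x⁻¹]`. -/
theorem laurent_poly_span_closure_half (j : ℕ) :
    (fun p => (T 1 + 1) * lpDeriv p)^[j]
        ((-2 : ℂ) • (T (-3 : ℤ) + 2 • T (-2 : ℤ) + T (-1 : ℤ))) ∈ negPowers ∧
      (T (-2 : ℤ) + 2 • T (-1 : ℤ) + 1) *
          (fun p => (T 1 + 1) * lpDeriv p)^[j]
            ((-2 : ℂ) • (T (-3 : ℤ) + 2 • T (-2 : ℤ) + T (-1 : ℤ))) ∈ negPowers ∧
      ((-2 : ℂ) • (T (-3 : ℤ) + 2 • T (-2 : ℤ) + T (-1 : ℤ))) *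
          (fun p => (T 1 + 1) * lpDeriv p)^[j]
            ((-2 : ℂ) • (T (-3 : ℤ) + 2 • T (-2 : ℤ) + T (-1 : ℤ))) ∈ negPowers := by
  have key : (fun p => (T 1 + 1) * lpDeriv p)^[j]
      ((-2 : ℂ) • (T (-3 : ℤ) + 2 • T (-2 : ℤ) + T (-1 : ℤ))) ∈ negPowers := by
    induction j with
    | zero => exact g_mem
    | succ n ih => rw [Function.iterate_succ_apply']; exact D_mem ih
  exact ⟨key, mulf_mem key, mulg_mem key⟩


end
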